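/- Let Q be a 3×3 real transition rate matrix with stationary probability row vector μ, characteristic polynomial X(X + λ1)(X + λ2) with λ1, λ2 ≠ 0, λ1 ≠ λ2, and transition rate flux ν = μ1·Q₁₂ − μ2·Q₂₁. Let Π be a 3×K state-dependent probability matrix with columns φ_k and Λ_k = diag(φ_k). Then for every t > 0 and all observation symbols i, j, the flux of the 2-dimensional likelihood function satisfies μ·Λ_i·exp(tQ)·Λ_j·e − μ·Λ_j·exp(tQ)·Λ_i·e = (ν·A/(λ1 − λ2))·(e^{−λ2 t} − e^{−λ1 t}), where, writing φ_i = (x1, y1, z1)ᵀ and φ_j = (x2, y2, z2)ᵀ, A = (y2 − x2)(x1 − z1) − (x2 − z2)(y1 − x1). -/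

import Mathlib

open Matrix Polynomial

theorem exp_smul_idem {𝔸 : Type*} [NormedRing 𝔸] [NormedAlgebra ℝ 𝔸] [CompleteSpace 𝔸]
    (P : 𝔸) (h : P * P = P) (s : ℝ) :
    NormedSpace.exp (s • P) = 1 + (Real.exp s - 1) • P := by
  have hpow : ∀ n : ℕ, (s • P) ^ (n + 1) = s ^ (n + 1) • P := by
    intro n
    induction n with
    | zero => simp
    | succ n ih =>
      rw [pow_succ, ih, smul_mul_assoc, mul_smul_comm, h, smul_smul, ← pow_succ]
  have hsum : Summable fun n : ℕ => s ^ n / (Nat.factorial n : ℝ) :=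
    Real.summable_pow_div_factorial s
  have hsum' : Summable fun n : ℕ => s ^ (n+1) / (Nat.factorial (n+1) : ℝ) :=
    (summable_nat_add_iff 1).2 hsum
  have hexps : Real.exp s = ∑' n : ℕ, s ^ n / (Nat.factorial n : ℝ) := by
    rw [Real.exp_eq_exp_ℝ, NormedSpace.exp_eq_tsum_div]
  have hsummain : Summable fun n : ℕ => ((Nat.factorial n : ℝ))⁻¹ • (s • P) ^ n :=
    NormedSpace.expSeries_summable' (𝕂 := ℝ) (s • P)
  rw [NormedSpace.exp_eq_tsum ℝ]
  beta_reduce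
  rw [Summable.tsum_eq_zero_add hsummain]
  have heq : ∀ n : ℕ, ((Nat.factorial (n+1) : ℝ))⁻¹ • (s • P) ^ (n+1) =
      (s ^ (n+1) / (Nat.factorial (n+1) : ℝ)) • P := by
    intro n
    rw [hpow, smul_smul, div_eq_inv_mul, mul_comm]
  simp only [heq, pow_zero, Nat.factorial_zero, Nat.cast_one, inv_one, one_smul]
  rw [Summable.tsum_smul_const hsum']
  congr 1
  have h2 := Summable.tsum_eq_zero_add hsum
  rw [← hexps] at h2
  simp only [pow_zero, Nat.factorial_zero, Nat.cast_one, div_one] at h2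
  rw [← sub_eq_iff_eq_add'] at h2
  rw [← h2]

theorem exp_smul_idem_mat {n : ℕ} (P : Matrix (Fin n) (Fin n) ℝ) (h : P * P = P) (s : ℝ) :
    NormedSpace.exp (s • P) = 1 + (Real.exp s - 1) • P := by
  letI : SeminormedRing (Matrix (Fin n) (Fin n) ℝ) := Matrix.linftyOpSemiNormedRing
  letI : NormedRing (Matrix (Fin n) (Fin n) ℝ) := Matrix.linftyOpNormedRing
  letI : NormedAlgebra ℝ (Matrix (Fin n) (Fin n) ℝ) := Matrix.linftyOpNormedAlgebra
  exact exp_smul_idem P h s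

theorem exp_formula (Q : Matrix (Fin 3) (Fin 3) ℝ) (lam1 lam2 t : ℝ)
    (hlam1 : lam1 ≠ 0) (hlam2 : lam2 ≠ 0) (hne : lam1 ≠ lam2)
    (hchar : Q.charpoly = X * (X + C lam1) * (X + C lam2)) :
    NormedSpace.exp (t • Q) =
      1 + ((Real.exp (-lam1*t) - 1) * (lam1*(lam1-lam2))⁻¹) • (Q*Q + lam2 • Q)
        + ((Real.exp (-lam2*t) - 1) * (lam2*(lam2-lam1))⁻¹) • (Q*Q + lam1 • Q) := by
  have hd : lam1 - lam2 ≠ 0 := sub_ne_zero.2 hne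
  have hd' : lam2 - lam1 ≠ 0 := sub_ne_zero.2 (Ne.symm hne)
  have hCH : Q * (Q + lam1 • 1) * (Q + lam2 • 1) = 0 := by
    have h := Matrix.aeval_self_charpoly Q
    rw [hchar] at h
    simpa only [_root_.map_mul, _root_.map_add, aeval_X, aeval_C,
      Algebra.algebraMap_eq_smul_one] using h
  have hexp0 : Q * (Q + lam1 • 1) * (Q + lam2 • 1)
      = Q*Q*Q + (lam1+lam2) • (Q*Q) + (lam1*lam2) • Q := by
    simp only [mul_add, add_mul, mul_smul_comm, smul_mul_assoc, mul_one, one_mul,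
      smul_smul, smul_add, mul_assoc]
    module
  have h3 : Q*Q*Q = (-(lam1+lam2)) • (Q*Q) + (-(lam1*lam2)) • Q := by
    rw [hexp0] at hCH
    have : Q*Q*Q - ((-(lam1+lam2)) • (Q*Q) + (-(lam1*lam2)) • Q)
        = Q*Q*Q + (lam1+lam2) • (Q*Q) + (lam1*lam2) • Q := by module
    rw [hCH] at this
    exact sub_eq_zero.1 this
  have h4 : Q*Q*Q*Q = ((lam1+lam2)*(lam1+lam2) - lam1*lam2) • (Q*Q)
      + ((lam1+lam2)*(lam1*lam2)) • Q := by
    have h4' : Q*Q*Q*Q = Q * (Q*Q*Q) := by noncomm_ring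
    rw [h4', h3]
    simp only [mul_add, mul_smul_comm, ← mul_assoc]
    rw [h3]
    module
  have hmul : ∀ a b : ℝ, (Q*Q + a • Q) * (Q*Q + b • Q)
      = Q*Q*Q*Q + (a+b) • (Q*Q*Q) + (a*b) • (Q*Q) := by
    intro a b
    simp only [mul_add, add_mul, smul_mul_assoc, mul_smul_comm, smul_smul, mul_assoc]
    module
  set P1 : Matrix (Fin 3) (Fin 3) ℝ := (lam1*(lam1-lam2))⁻¹ • (Q*Q + lam2 • Q) with hP1def
  set P2 : Matrix (Fin 3) (Fin 3) ℝ := (lam2*(lam2-lam1))⁻¹ • (Q*Q + lam1 • Q) with hP2def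
  have hP1 : P1 * P1 = P1 := by
    rw [hP1def, smul_mul_smul_comm, hmul, h4, h3]
    match_scalars <;> field_simp <;> ring
  have hP2 : P2 * P2 = P2 := by
    rw [hP2def, smul_mul_smul_comm, hmul, h4, h3]
    match_scalars <;> field_simp <;> ring
  have hP12 : P1 * P2 = 0 := by
    rw [hP1def, hP2def, smul_mul_smul_comm, hmul, h4, h3]
    match_scalars <;> ring
  have hP21 : P2 * P1 = 0 := by
    rw [hP1def, hP2def, smul_mul_smul_comm, hmul, h4, h3]
    match_scalars <;> ring
  have hsplit : t • Q = (-lam1*t) • P1 + (-lam2*t) • P2 := by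
    rw [hP1def, hP2def]
    match_scalars <;> field_simp <;> ring
  have hcP : Commute P1 P2 := hP12.trans hP21.symm
  have hcomm : Commute ((-lam1*t) • P1) ((-lam2*t) • P2) :=
    (hcP.smul_left (-lam1*t)).smul_right (-lam2*t)
  rw [hsplit, Matrix.exp_add_of_commute _ _ hcomm,
    exp_smul_idem_mat P1 hP1, exp_smul_idem_mat P2 hP2]
  rw [add_mul, mul_add, mul_add, one_mul, mul_one, smul_mul_smul_comm, hP12, smul_zero]
  rw [hP1def, hP2def]
  simp only [one_mul, add_zero]
  module


set_option maxRecDepth 8000 in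
set_option maxHeartbeats 2000000 in
/-- Flux of the 2-dimensional likelihood function of the observed
process of a continuous-time three-state hidden Markov model:
`Pr{S₀=i, S_t=j} − Pr{S₀=j, S_t=i} = ν·A/(λ₁−λ₂)·(e^{−λ₂t} − e^{−λ₁t})`. -/
theorem flux_two_dim_likelihood (Q : Matrix (Fin 3) (Fin 3) ℝ) (μ : Fin 3 → ℝ)
    (lam1 lam2 : ℝ) {K : ℕ} (E : Matrix (Fin 3) (Fin K) ℝ)
    (hoff : ∀ i j : Fin 3, i ≠ j → 0 ≤ Q i j)
    (hrow : ∀ i : Fin 3, ∑ j, Q i j = 0)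
    (hpos : ∀ i, 0 < μ i) (hsum : μ 0 + μ 1 + μ 2 = 1)
    (hstat : μ ᵥ* Q = 0)
    (hchar : Q.charpoly = X * (X + C lam1) * (X + C lam2))
    (hlam1 : lam1 ≠ 0) (hlam2 : lam2 ≠ 0) (hne : lam1 ≠ lam2)
    (hE0 : ∀ a k, 0 ≤ E a k) (hE1 : ∀ a : Fin 3, ∑ k, E a k = 1)
    (t : ℝ) (ht : 0 < t) (i j : Fin K) :
    (μ ᵥ* Matrix.diagonal (fun a => E a i) ᵥ* NormedSpace.exp (t • Q) ᵥ*
        Matrix.diagonal (fun a => E a j)) ⬝ᵥ (fun _ => (1 : ℝ)) -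
      (μ ᵥ* Matrix.diagonal (fun a => E a j) ᵥ* NormedSpace.exp (t • Q) ᵥ*
        Matrix.diagonal (fun a => E a i)) ⬝ᵥ (fun _ => (1 : ℝ)) =
    (μ 0 * Q 0 1 - μ 1 * Q 1 0) *
        ((E 1 j - E 0 j) * (E 0 i - E 2 i) - (E 0 j - E 2 j) * (E 1 i - E 0 i)) /
        (lam1 - lam2) *
      (Real.exp (-lam2 * t) - Real.exp (-lam1 * t)) := by
  have hd : lam1 - lam2 ≠ 0 := sub_ne_zero.2 hne
  have hd' : lam2 - lam1 ≠ 0 := sub_ne_zero.2 (Ne.symm hne)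
  obtain ⟨c1, hc1⟩ : ∃ c : ℝ, c = (Real.exp (-lam1*t) - 1) * (lam1*(lam1-lam2))⁻¹ := ⟨_, rfl⟩
  obtain ⟨c2, hc2⟩ : ∃ c : ℝ, c = (Real.exp (-lam2*t) - 1) * (lam2*(lam2-lam1))⁻¹ := ⟨_, rfl⟩
  have hentry : ∀ a b : Fin 3, NormedSpace.exp (t • Q) a b =
      (if a = b then (1:ℝ) else 0) + c1 * ((Q*Q) a b + lam2 * Q a b)
        + c2 * ((Q*Q) a b + lam1 * Q a b) := by
    intro a b
    rw [exp_formula Q lam1 lam2 t hlam1 hlam2 hne hchar]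
    simp only [Matrix.add_apply, Matrix.smul_apply, Matrix.one_apply, Matrix.smul_apply,
      smul_eq_mul, hc1, hc2]
    try ring
  -- row sums
  have hrow0 := hrow 0; have hrow1 := hrow 1; have hrow2 := hrow 2
  simp only [Fin.sum_univ_three] at hrow0 hrow1 hrow2
  -- stationarity components
  have hstat0 := congrFun hstat 0
  have hstat1 := congrFun hstat 1
  have hstat2 := congrFun hstat 2
  simp only [Matrix.vecMul, dotProduct, Fin.sum_univ_three,
    Pi.zero_apply] at hstat0 hstat1 hstat2
  -- trace
  have htr : Q 0 0 + Q 1 1 + Q 2 2 = -(lam1 + lam2) := by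
    have h := Matrix.trace_eq_neg_charpoly_coeff Q
    rw [hchar] at h
    have hpoly : X * (X + C lam1) * (X + C lam2) =
        X^3 + C (lam1 + lam2) * X^2 + C (lam1*lam2) * X := by
      simp only [C_add, C_mul]; ring
    rw [hpoly, Matrix.trace_fin_three] at h
    simp only [Fintype.card_fin, coeff_add, coeff_C_mul, coeff_X_pow, coeff_X] at h
    norm_num at h
    linarith [h]
  -- flux equalities
  have f1 : μ 1 * Q 1 2 - μ 2 * Q 2 1 = μ 0 * Q 0 1 - μ 1 * Q 1 0 := by
    linear_combination μ 1 * hrow1 - hstat1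
  have f2 : μ 2 * Q 2 0 - μ 0 * Q 0 2 = μ 0 * Q 0 1 - μ 1 * Q 1 0 := by
    linear_combination hstat0 - μ 0 * hrow0
  have g01 : μ 0 * (Q*Q) 0 1 - μ 1 * (Q*Q) 1 0 =
      (μ 0 * Q 0 1 - μ 1 * Q 1 0) * (Q 0 0 + Q 1 1 + Q 2 2) := by
    simp only [Matrix.mul_apply, Fin.sum_univ_three]
    linear_combination (-(Q 2 1)) * f2 + (-(Q 2 0)) * f1
      + (-(μ 0 * Q 0 1 - μ 1 * Q 1 0)) * hrow2
  have g12 : μ 1 * (Q*Q) 1 2 - μ 2 * (Q*Q) 2 1 =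
      (μ 0 * Q 0 1 - μ 1 * Q 1 0) * (Q 0 0 + Q 1 1 + Q 2 2) := by
    simp only [Matrix.mul_apply, Fin.sum_univ_three]
    linear_combination (Q 1 1 + Q 2 2) * f1 - Q 0 1 * f2
      + (-(μ 0 * Q 0 1 - μ 1 * Q 1 0)) * hrow0
  have g20 : μ 2 * (Q*Q) 2 0 - μ 0 * (Q*Q) 0 2 =
      (μ 0 * Q 0 1 - μ 1 * Q 1 0) * (Q 0 0 + Q 1 1 + Q 2 2) := by
    simp only [Matrix.mul_apply, Fin.sum_univ_three]
    linear_combination (Q 0 0 + Q 2 2) * f2 - Q 1 0 * f1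
      + (-(μ 0 * Q 0 1 - μ 1 * Q 1 0)) * hrow1
  have hκ : -lam1 * c1 - lam2 * c2 =
      (Real.exp (-lam2*t) - Real.exp (-lam1*t)) / (lam1 - lam2) := by
    rw [hc1, hc2]
    field_simp
    ring
  simp only [Matrix.vecMul, dotProduct, Matrix.diagonal_apply, Fin.sum_univ_three,
    hentry, mul_ite, ite_mul, mul_one, mul_zero, zero_mul, one_mul, Fin.reduceEq, reduceIte]
  linear_combination
    (c1 + c2) * ((E 0 i * E 1 j - E 1 i * E 0 j) * g01
      + (E 1 i * E 2 j - E 2 i * E 1 j) * g12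
      + (E 2 i * E 0 j - E 0 i * E 2 j) * g20)
    + (c1 * lam2 + c2 * lam1) * ((E 1 i * E 2 j - E 2 i * E 1 j) * f1
      + (E 2 i * E 0 j - E 0 i * E 2 j) * f2)
    + (μ 0 * Q 0 1 - μ 1 * Q 1 0) * (c1 + c2)
      * ((E 0 i * E 1 j - E 1 i * E 0 j) + (E 1 i * E 2 j - E 2 i * E 1 j)
        + (E 2 i * E 0 j - E 0 i * E 2 j)) * htr
    + (μ 0 * Q 0 1 - μ 1 * Q 1 0)
      * ((E 0 i * E 1 j - E 1 i * E 0 j) + (E 1 i * E 2 j - E 2 i * E 1 j)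
        + (E 2 i * E 0 j - E 0 i * E 2 j)) * hκ
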